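/- arXiv:1401.0885 — 7 statements merged into one kernel-verified Lean document; each statement's English description precedes it below -/
import Mathlib

section
/- Every basic open set of the Lawson topology on the poset (𝒮, ⊆) of knowledge states is open in the state topology; in particular, for each x ∈ A the complement of the principal filter ↑{x} = {Y ∈ 𝒮 | x ∈ Y} equals B_x ∪ ⋃{A_y | y ∼ x, y ≠ x} and is open in the state topology. -/
variable {A : Type*}

/-- A knowledge state: meets each equivalence class in an empty or singleton set. -/
def IsState (r : A → A → Prop) (X : Set A) : Prop :=
  ∀ x : A, X ∩ {y | r y x} = ∅ ∨ ∃ a, X ∩ {y | r y x} = {a}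

/-- The set of knowledge states. -/
def States (r : A → A → Prop) := {X : Set A // IsState r X}

/-- Subbasic positive-information set. -/
def Aset (r : A → A → Prop) (x : A) : Set (States r) := {X | x ∈ X.1}

/-- Subbasic negative-information set. -/
def Bset (r : A → A → Prop) (x : A) : Set (States r) := {X | X.1 ∩ {y | r y x} = ∅}

/-- The state topology. -/
def stateTop (r : A → A → Prop) : TopologicalSpace (States r) :=
  .generateFrom (Set.range (Aset r) ∪ Set.range (Bset r))

/-- The Lawson topology on the poset of knowledge states, generated by complements of
principal filters together with the upper sets of finite states. -/
def lawsonTop (r : A → A → Prop) : TopologicalSpace (States r) :=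
  .generateFrom ({S | ∃ X : States r, S = {Y : States r | ¬ X.1 ⊆ Y.1}} ∪
    {S | ∃ s : States r, s.1.Finite ∧ S = {Y : States r | s.1 ⊆ Y.1}})

theorem stateTop_le_lawsonTop (r : A → A → Prop) (hr : Equivalence r) :
    stateTop r ≤ lawsonTop r ∧
      ∀ x : A,
        ({Y : States r | x ∈ Y.1}ᶜ = Bset r x ∪ ⋃ y ∈ {y | r y x ∧ y ≠ x}, Aset r y) ∧
        @IsOpen _ (stateTop r) ({Y : States r | x ∈ Y.1}ᶜ) := by
  letI : TopologicalSpace (States r) := stateTop r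
  have key : ∀ x : A,
      ({Y : States r | x ∈ Y.1}ᶜ = Bset r x ∪ ⋃ y ∈ {y | r y x ∧ y ≠ x}, Aset r y) := by
    intro x
    ext Y
    simp only [Set.mem_compl_iff, Set.mem_setOf_eq, Set.mem_union, Set.mem_iUnion, Aset, Bset]
    constructor
    · intro hx
      by_cases h : Y.1 ∩ {y | r y x} = ∅
      · exact Or.inl h
      · right
        obtain ⟨y, hy⟩ := Set.nonempty_iff_ne_empty.mpr h
        exact ⟨y, ⟨hy.2, fun e => hx (e ▸ hy.1)⟩, hy.1⟩
    · rintro (h | ⟨y, ⟨hryx, hne⟩, hyY⟩) hxY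
      · have : x ∈ Y.1 ∩ {y | r y x} := ⟨hxY, hr.refl x⟩
        rw [h] at this; exact this
      · rcases Y.2 x with h0 | ⟨a, ha⟩
        · have : y ∈ Y.1 ∩ {z | r z x} := ⟨hyY, hryx⟩
          rw [h0] at this; exact this
        · rw [Set.eq_singleton_iff_unique_mem] at ha
          have hy : y = a := ha.2 y ⟨hyY, hryx⟩
          have hx' : x = a := ha.2 x ⟨hxY, hr.refl x⟩
          exact hne (hy.trans hx'.symm)
  have keyOpen : ∀ x : A, IsOpen ({Y : States r | x ∈ Y.1}ᶜ) := by
    intro x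
    rw [key x]
    apply IsOpen.union
    · exact TopologicalSpace.GenerateOpen.basic _ (Or.inr ⟨x, rfl⟩)
    · exact isOpen_biUnion fun y _ => TopologicalSpace.GenerateOpen.basic _ (Or.inl ⟨y, rfl⟩)
  constructor
  · apply le_generateFrom
    rintro S (⟨X, rfl⟩ | ⟨s, hs, rfl⟩)
    · have : {Y : States r | ¬ X.1 ⊆ Y.1} = ⋃ x ∈ X.1, {Y : States r | x ∈ Y.1}ᶜ := by
        ext Y
        simp [Set.not_subset]
      rw [this]
      exact isOpen_biUnion fun x _ => keyOpen x
    · have : {Y : States r | s.1 ⊆ Y.1} = ⋂ x ∈ s.1, Aset r x := by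
        ext Y
        simp [Set.subset_def, Aset]
      rw [this]
      exact hs.isOpen_biInter fun x _ =>
        TopologicalSpace.GenerateOpen.basic _ (Or.inl ⟨x, rfl⟩)
  · exact fun x => ⟨key x, keyOpen x⟩
end

section
/- For x ∈ A, the set B_x = {X ∈ 𝒮 | X ∩ [x] = ∅} is open in the Lawson topology on (𝒮, ⊆) if and only if the equivalence class [x] is finite. -/
variable {A : Type*}

/-- The empty state. -/
def emptyState (r : A → A → Prop) : States r :=
  ⟨∅, fun _ => Or.inl (by simp)⟩

/-- A singleton state. -/
def singState (r : A → A → Prop) (z : A) : States r :=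
  ⟨{z}, fun w => by
    rcases Set.subset_singleton_iff_eq.mp
      (Set.inter_subset_left : {z} ∩ {y | r y w} ⊆ {z}) with h | h
    · exact Or.inl h
    · exact Or.inr ⟨z, h⟩⟩

lemma key (r : A → A → Prop) (U : Set (States r))
    (h : TopologicalSpace.GenerateOpen
      ({S | ∃ X : States r, S = {Y : States r | ¬ X.1 ⊆ Y.1}} ∪
       {S | ∃ s : States r, s.1.Finite ∧ S = {Y : States r | s.1 ⊆ Y.1}}) U) :
    emptyState r ∈ U → ∃ s : Set (States r), s.Finite ∧ (∀ X ∈ s, X.1.Nonempty) ∧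
      (⋂ X ∈ s, {Y : States r | ¬ X.1 ⊆ Y.1}) ⊆ U := by
  induction h with
  | basic V hV =>
      intro he
      rcases hV with ⟨X, rfl⟩ | ⟨s, hsf, rfl⟩
      · refine ⟨{X}, Set.finite_singleton X, ?_, ?_⟩
        · rintro Y rfl
          refine Set.nonempty_iff_ne_empty.mpr (fun h0 => he ?_)
          rw [h0]; exact Set.empty_subset _
        · intro Y hY
          exact Set.mem_iInter₂.mp hY X rfl
      · have hs : s.1 = ∅ := Set.subset_empty_iff.mp he
        refine ⟨∅, Set.finite_empty, by simp, ?_⟩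
        intro Y _
        show s.1 ⊆ Y.1
        rw [hs]; exact Set.empty_subset _
  | univ => exact fun _ => ⟨∅, Set.finite_empty, by simp, fun Y _ => trivial⟩
  | inter U₁ U₂ h1 h2 ih1 ih2 =>
      intro he
      obtain ⟨s1, f1, n1, sub1⟩ := ih1 he.1
      obtain ⟨s2, f2, n2, sub2⟩ := ih2 he.2
      refine ⟨s1 ∪ s2, f1.union f2, ?_, ?_⟩
      · rintro X (h | h)
        exacts [n1 X h, n2 X h]
      · intro Y hY
        refine ⟨sub1 ?_, sub2 ?_⟩
        · exact Set.mem_iInter₂.mpr fun X hX =>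
            Set.mem_iInter₂.mp hY X (Set.mem_union_left _ hX)
        · exact Set.mem_iInter₂.mpr fun X hX =>
            Set.mem_iInter₂.mp hY X (Set.mem_union_right _ hX)
  | sUnion S hS ih =>
      intro he
      obtain ⟨V, hV, hVe⟩ := he
      obtain ⟨s, f, n, sub⟩ := ih V hV hVe
      exact ⟨s, f, n, sub.trans (Set.subset_sUnion_of_mem hV)⟩

theorem lawson_open_Bset_iff (r : A → A → Prop) (hr : Equivalence r) (x : A) :
    @IsOpen _ (lawsonTop r) (Bset r x) ↔ {y | r y x}.Finite := by
  constructor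
  · intro hopen
    by_contra hinf
    rw [← Set.not_infinite, not_not] at hinf
    have hgen : TopologicalSpace.GenerateOpen
        ({S | ∃ X : States r, S = {Y : States r | ¬ X.1 ⊆ Y.1}} ∪
         {S | ∃ s : States r, s.1.Finite ∧ S = {Y : States r | s.1 ⊆ Y.1}}) (Bset r x) := hopen
    have hmem : emptyState r ∈ Bset r x := by
      show (∅ : Set A) ∩ {y | r y x} = ∅
      simp
    obtain ⟨s, hf, hn, hsub⟩ := key r (Bset r x) hgen hmem
    -- the "forbidden" elements
    set T : Set A := ⋃ X ∈ s, {z | X.1 = {z}} with hT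
    have hTfin : T.Finite := by
      refine Set.Finite.biUnion hf fun X _ => ?_
      exact Set.Subsingleton.finite fun a ha b hb => by
        have : ({a} : Set A) = {b} := by rw [← ha, ← hb]
        simpa using this
    obtain ⟨z, hz⟩ := (hinf.diff hTfin).nonempty
    have hzY : singState r z ∈ ⋂ X ∈ s, {Y : States r | ¬ X.1 ⊆ Y.1} := by
      refine Set.mem_iInter₂.mpr fun X hX hXsub => ?_
      have : X.1 = {z} := by
        rcases Set.subset_singleton_iff_eq.mp hXsub with h | h
        · exact absurd h (Set.nonempty_iff_ne_empty.mp (hn X hX))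
        · exact h
      exact hz.2 (Set.mem_biUnion hX this)
    have hB : (singState r z).1 ∩ {y | r y x} = ∅ := hsub hzY
    have : z ∈ (singState r z).1 ∩ {y | r y x} := ⟨rfl, hz.1⟩
    rw [hB] at this
    exact this
  · intro hfin
    letI := lawsonTop r
    have heq : Bset r x = ⋂ z ∈ {y | r y x}, {Y : States r | ¬ (singState r z).1 ⊆ Y.1} := by
      ext Y
      simp only [Bset, Set.mem_setOf_eq, Set.mem_iInter₂]
      constructor
      · intro hY z hz hsub
        have : z ∈ Y.1 ∩ {y | r y x} := ⟨hsub rfl, hz⟩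
        rw [hY] at this
        exact this
      · intro h
        ext w
        simp only [Set.mem_inter_iff, Set.mem_empty_iff_false, iff_false, not_and]
        intro hw hrw
        exact h w hrw (by rintro a rfl; exact hw)
    rw [heq]
    exact Set.Finite.isOpen_biInter hfin fun z _ =>
      TopologicalSpace.GenerateOpen.basic _ (Or.inl ⟨singState r z, rfl⟩)
end

section
/- If all equivalence classes of ∼ are singletons and there are infinitely many of them, then the state topology on 𝒮 is homeomorphic to the Cantor space 2^ℕ. -/
variable {A : Type*}

open Classical in
/-- When `r` is equality, states are exactly subsets, encoded as `A → Bool`. -/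
noncomputable def statesEquiv (r : A → A → Prop) (hsing : ∀ x y : A, r x y ↔ x = y) :
    States r ≃ (A → Bool) where
  toFun X a := decide (a ∈ X.1)
  invFun f := ⟨{a | f a = true}, by
    intro x
    by_cases h : f x = true
    · right; exact ⟨x, by ext y; simp [hsing]; aesop⟩
    · left; ext y; simp [hsing]; aesop⟩
  left_inv X := Subtype.ext (by ext a; simp)
  right_inv f := by ext a; simp

theorem stateTop_homeomorph_cantor (r : A → A → Prop) [Countable A] [Infinite A]
    (hsing : ∀ x y : A, r x y ↔ x = y) :
    letI : TopologicalSpace (States r) := stateTop r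
    Nonempty (States r ≃ₜ (ℕ → Bool)) := by
  letI : TopologicalSpace (States r) := stateTop r
  obtain ⟨eA⟩ : Nonempty (A ≃ ℕ) := ⟨(nonempty_denumerable_iff.mpr ⟨‹_›, ‹_›⟩).some.eqv⟩
  classical
  set e := statesEquiv r hsing with he
  have hBset : ∀ a : A, Bset r a = {X : States r | a ∉ X.1} := by
    intro a
    ext X
    simp only [Bset, Set.mem_setOf_eq]
    constructor
    · intro h ha
      have : a ∈ X.1 ∩ {y | r y a} := ⟨ha, by simp [hsing]⟩
      simp [h] at this
    · intro h
      ext y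
      simp only [Set.mem_inter_iff, Set.mem_setOf_eq, hsing]
      aesop
  have hcont : Continuous e := by
    rw [continuous_pi_iff]
    intro a
    rw [continuous_discrete_rng]
    intro b
    cases b
    · have : (fun X : States r => e X a) ⁻¹' {false} = Bset r a := by
        ext X
        simp [he, statesEquiv, hBset a]
        show decide (a ∈ X.1) = false ↔ a ∉ X.1
        simp
      rw [this]
      exact TopologicalSpace.isOpen_generateFrom_of_mem (Or.inr ⟨a, rfl⟩)
    · have : (fun X : States r => e X a) ⁻¹' {true} = Aset r a := by
        ext X
        simp [he, statesEquiv, Aset]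
        show decide (a ∈ X.1) = true ↔ a ∈ X.1
        simp
      rw [this]
      exact TopologicalSpace.isOpen_generateFrom_of_mem (Or.inl ⟨a, rfl⟩)
  have hcontinv : Continuous e.symm := by
    apply continuous_generateFrom_iff.mpr
    rintro s (⟨a, rfl⟩ | ⟨a, rfl⟩)
    · have : e.symm ⁻¹' (Aset r a) = (fun f : A → Bool => f a) ⁻¹' {true} := by
        ext f
        simp [he, statesEquiv, Aset]
        show f a = true ↔ f a = true
        simp
      rw [this]
      exact (continuous_apply a).isOpen_preimage _ (isOpen_discrete _)
    · have : e.symm ⁻¹' (Bset r a) = (fun f : A → Bool => f a) ⁻¹' {false} := by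
        ext f
        simp [he, statesEquiv, hBset a]
        show ¬ (f a = true) ↔ f a = false
        simp
      rw [this]
      exact (continuous_apply a).isOpen_preimage _ (isOpen_discrete _)
  exact ⟨(Homeomorph.mk e hcont hcontinv).trans (Homeomorph.piCongrLeft (Y := fun _ => Bool) eA.symm).symm⟩
end

section
/- The state topology on 𝒮 is homeomorphic to the product space ∏_{[x] ∈ A/∼} ([x] ⊎ 1) of discrete spaces, where 1 is a one-point space representing the undefined answer. -/
variable {A : Type*}

section Aux

variable (s : Setoid A)

lemma state_uniq (X : States s.r) {a b : A} (ha : a ∈ X.1) (hb : b ∈ X.1)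
    (h : s.r a b) : a = b := by
  rcases X.2 b with h0 | ⟨c, hc⟩
  · have h1 : a ∈ X.1 ∩ {y | s.r y b} := ⟨ha, h⟩
    rw [h0] at h1
    exact h1.elim
  · have h1 : a ∈ X.1 ∩ {y | s.r y b} := ⟨ha, h⟩
    have h2 : b ∈ X.1 ∩ {y | s.r y b} := ⟨hb, s.refl b⟩
    rw [hc] at h1 h2
    exact h1.trans h2.symm

lemma mk_eq_iff {a b : A} : Quotient.mk s a = Quotient.mk s b ↔ s.r a b :=
  ⟨fun h => Quotient.exact h, fun h => Quotient.sound h⟩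

open Classical in
/-- Forward map: the answer of a state on each question class. -/
noncomputable def toPi (X : States s.r) (q : Quotient s) :
    Option {a : A // Quotient.mk s a = q} :=
  if h : ∃ a : A, Quotient.mk s a = q ∧ a ∈ X.1 then
    some ⟨h.choose, h.choose_spec.1⟩ else none

/-- Backward map: the state determined by a family of answers. -/
def ofPi (f : (q : Quotient s) → Option {a : A // Quotient.mk s a = q}) : States s.r := by
  refine ⟨{a | Option.map Subtype.val (f (Quotient.mk s a)) = some a}, fun x => ?_⟩
  rcases Set.eq_empty_or_nonempty
      ({a | Option.map Subtype.val (f (Quotient.mk s a)) = some a} ∩ {y | s.r y x}) with h | ⟨a, ha⟩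
  · exact Or.inl h
  · refine Or.inr ⟨a, Set.Subset.antisymm (fun b hb => ?_) (fun b hb => hb ▸ ha)⟩
    have hax : Quotient.mk s a = Quotient.mk s x := (mk_eq_iff s).2 ha.2
    have hbx : Quotient.mk s b = Quotient.mk s x := (mk_eq_iff s).2 hb.2
    have h1 : Option.map Subtype.val (f (Quotient.mk s a)) = some a := ha.1
    have h2 : Option.map Subtype.val (f (Quotient.mk s b)) = some b := hb.1
    rw [hax] at h1; rw [hbx] at h2
    rw [h1] at h2
    exact (Option.some_injective _ h2).symm

lemma ofPi_toPi (X : States s.r) : ofPi s (toPi s X) = X := by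
  apply Subtype.ext
  ext a
  show Option.map Subtype.val (toPi s X (Quotient.mk s a)) = some a ↔ a ∈ X.1
  constructor
  · intro h
    unfold toPi at h
    split_ifs at h with hex
    · simp only [Option.map_some] at h
      have := Option.some_injective _ h
      rw [← this]
      exact hex.choose_spec.2
    · simp at h
  · intro ha
    have hex : ∃ b : A, Quotient.mk s b = Quotient.mk s a ∧ b ∈ X.1 := ⟨a, rfl, ha⟩
    unfold toPi
    rw [dif_pos hex]
    simp only [Option.map_some, Option.some.injEq]
    exact state_uniq s X hex.choose_spec.2 ha ((mk_eq_iff s).1 hex.choose_spec.1)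

lemma toPi_ofPi (f : (q : Quotient s) → Option {a : A // Quotient.mk s a = q}) :
    toPi s (ofPi s f) = f := by
  funext q
  rcases hfq : f q with _ | ⟨a, ha⟩
  · unfold toPi
    rw [dif_neg]
    rintro ⟨b, hb, hbX⟩
    have : Option.map Subtype.val (f (Quotient.mk s b)) = some b := hbX
    rw [hb, hfq] at this
    simp at this
  · subst ha
    have haX : a ∈ (ofPi s f).1 := by
      show Option.map Subtype.val (f (Quotient.mk s a)) = some a
      rw [hfq]; rfl
    have hex : ∃ b : A, Quotient.mk s b = Quotient.mk s a ∧ b ∈ (ofPi s f).1 := ⟨a, rfl, haX⟩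
    unfold toPi
    rw [dif_pos hex]
    congr 1
    apply Subtype.ext
    exact state_uniq s (ofPi s f) hex.choose_spec.2 haX ((mk_eq_iff s).1 hex.choose_spec.1)

/-- The underlying equivalence. -/
noncomputable def stateEquiv :
    States s.r ≃ ((q : Quotient s) → Option {a : A // Quotient.mk s a = q}) where
  toFun := toPi s
  invFun := ofPi s
  left_inv := ofPi_toPi s
  right_inv := toPi_ofPi s

lemma toPi_eq_none_iff (X : States s.r) (x : A) :
    toPi s X (Quotient.mk s x) = none ↔ X.1 ∩ {y | s.r y x} = ∅ := by
  unfold toPi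
  split_ifs with hex
  · simp only [reduceCtorEq, false_iff]
    obtain ⟨a, ha, haX⟩ := hex
    intro h
    have : a ∈ X.1 ∩ {y | s.r y x} := ⟨haX, (mk_eq_iff s).1 ha⟩
    rw [h] at this
    exact this.elim
  · simp only [true_iff]
    ext a
    simp only [Set.mem_inter_iff, Set.mem_setOf_eq, Set.mem_empty_iff_false, iff_false]
    rintro ⟨haX, har⟩
    exact hex ⟨a, (mk_eq_iff s).2 har, haX⟩

lemma toPi_eq_some_iff (X : States s.r) (a : A) :
    toPi s X (Quotient.mk s a) = some ⟨a, rfl⟩ ↔ a ∈ X.1 := by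
  unfold toPi
  split_ifs with hex
  · simp only [Option.some.injEq]
    constructor
    · intro h
      have := congrArg Subtype.val h
      simp only at this
      rw [← this]
      exact hex.choose_spec.2
    · intro ha
      exact Subtype.ext
        (state_uniq s X hex.choose_spec.2 ha ((mk_eq_iff s).1 hex.choose_spec.1))
  · simp only [reduceCtorEq, false_iff]
    exact fun ha => hex ⟨a, rfl, ha⟩

end Aux

theorem stateTop_homeomorph_pi (s : Setoid A) :
    letI : TopologicalSpace (States s.r) := stateTop s.r
    letI : ∀ q : Quotient s, TopologicalSpace (Option {a : A // Quotient.mk s a = q}) :=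
      fun _ => ⊥
    Nonempty (States s.r ≃ₜ ((q : Quotient s) → Option {a : A // Quotient.mk s a = q})) := by
  letI : TopologicalSpace (States s.r) := stateTop s.r
  letI : ∀ q : Quotient s, TopologicalSpace (Option {a : A // Quotient.mk s a = q}) :=
    fun _ => ⊥
  haveI : ∀ q : Quotient s, DiscreteTopology (Option {a : A // Quotient.mk s a = q}) :=
    fun _ => ⟨rfl⟩
  refine ⟨⟨stateEquiv s, ?_, ?_⟩⟩
  · -- continuity of toPi
    show Continuous (toPi s)
    apply continuous_pi
    intro q
    rw [continuous_discrete_rng]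
    rintro (_ | ⟨a, ha⟩)
    · obtain ⟨x, rfl⟩ := Quotient.exists_rep q
      have h : (fun X => toPi s X (Quotient.mk s x)) ⁻¹' {none} = Bset s.r x := by
        ext X
        simp only [Set.mem_preimage, Set.mem_singleton_iff]
        exact toPi_eq_none_iff s X x
      rw [h]
      exact TopologicalSpace.isOpen_generateFrom_of_mem (Or.inr ⟨x, rfl⟩)
    · subst ha
      have h : (fun X => toPi s X (Quotient.mk s a)) ⁻¹' {some ⟨a, rfl⟩} = Aset s.r a := by
        ext X
        simp only [Set.mem_preimage, Set.mem_singleton_iff]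
        exact toPi_eq_some_iff s X a
      rw [h]
      exact TopologicalSpace.isOpen_generateFrom_of_mem (Or.inl ⟨a, rfl⟩)
  · -- continuity of ofPi
    show Continuous (ofPi s)
    refine continuous_generateFrom_iff.2 ?_
    rintro _ (⟨a, rfl⟩ | ⟨x, rfl⟩)
    · have h : ofPi s ⁻¹' (Aset s.r a) =
          (fun f : (q : Quotient s) → Option {a : A // Quotient.mk s a = q} =>
            f (Quotient.mk s a)) ⁻¹' {o | Option.map Subtype.val o = some a} := by
        ext f
        rfl
      rw [h]
      exact (continuous_apply _).isOpen_preimage _ (isOpen_discrete _)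
    · have h : ofPi s ⁻¹' (Bset s.r x) =
          (fun f : (q : Quotient s) → Option {a : A // Quotient.mk s a = q} =>
            f (Quotient.mk s x)) ⁻¹' {none} := by
        ext f
        simp only [Set.mem_preimage, Set.mem_singleton_iff]
        have h2 := toPi_eq_none_iff s (ofPi s f) x
        rw [toPi_ofPi] at h2
        exact Iff.trans Iff.rfl h2.symm
      rw [h]
      exact (continuous_apply _).isOpen_preimage _ (isOpen_discrete _)
end

section
/- Every layered knowledge structure has a model: there exists a knowledge state X that is sound (every x ∈ X satisfies tr(x, X) = true) and complete (whenever X ∩ [x] = ∅ then tr(x, X) = false). -/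
variable {A : Type*}

theorem isState_mono {r : A → A → Prop} {X Y : Set A} (hX : IsState r X) (hYX : Y ⊆ X) :
    IsState r Y := by
  intro x
  rcases hX x with h0 | ⟨a, ha⟩
  · left
    apply Set.eq_empty_of_subset_empty
    rw [← h0]
    exact Set.inter_subset_inter_left _ hYX
  · have h : Y ∩ {y | r y x} ⊆ {a} := ha ▸ Set.inter_subset_inter_left _ hYX
    rcases Set.subset_singleton_iff_eq.mp h with h | h
    · exact Or.inl h
    · exact Or.inr ⟨a, h⟩

/-- Restriction of a knowledge state to answers of level below `α`. -/
def restrict (r : A → A → Prop) (lev : A → Ordinal) (α : Ordinal) (X : States r) : States r :=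
  ⟨{y ∈ X.1 | lev y < α}, isState_mono X.2 (Set.sep_subset _ _)⟩

/-- The selection condition: `x` is true at the state `Y` and is the `e`-least
such element of its class. -/
def Cnd (r : A → A → Prop) (tr : A → States r → Bool) (e : A → ℕ) (x : A) (Y : Set A) : Prop :=
  ∃ h : IsState r Y, tr x ⟨Y, h⟩ = true ∧ ∀ y : A, r y x → tr y ⟨Y, h⟩ = true → e x ≤ e y

/-- Transfinite-recursive construction of the approximations to the model. -/
noncomputable def Fam (r : A → A → Prop) (lev : A → Ordinal) (tr : A → States r → Bool)
    (e : A → ℕ) (α : Ordinal) : Set A :=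
  {x | ∃ _h : lev x < α, Cnd r tr e x (Fam r lev tr e (lev x))}
  termination_by α
  decreasing_by assumption

/-- The limit of the construction. -/
def Xset (r : A → A → Prop) (lev : A → Ordinal) (tr : A → States r → Bool) (e : A → ℕ) : Set A :=
  {x | Cnd r tr e x (Fam r lev tr e (lev x))}

theorem fam_eq (r : A → A → Prop) (lev : A → Ordinal) (tr : A → States r → Bool) (e : A → ℕ)
    (α : Ordinal) : Fam r lev tr e α = {x | x ∈ Xset r lev tr e ∧ lev x < α} := by
  rw [Fam]
  ext x
  exact ⟨fun ⟨h1, h2⟩ => ⟨h2, h1⟩, fun ⟨h2, h1⟩ => ⟨h1, h2⟩⟩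

theorem cnd_unique {r : A → A → Prop} (hr : Equivalence r) {lev : A → Ordinal}
    (hlev : ∀ x y : A, r x y → lev x = lev y) {tr : A → States r → Bool} {e : A → ℕ}
    (he : Function.Injective e) {x y z : A}
    (hx : x ∈ Xset r lev tr e) (hy : y ∈ Xset r lev tr e)
    (hrx : r x z) (hry : r y z) : x = y := by
  have hxy : r x y := hr.trans hrx (hr.symm hry)
  have hl : lev x = lev y := hlev x y hxy
  obtain ⟨h1, t1, m1⟩ := hx
  obtain ⟨h2, t2, m2⟩ := hy
  have hst : (⟨Fam r lev tr e (lev y), h2⟩ : States r) = ⟨Fam r lev tr e (lev x), h1⟩ :=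
    Subtype.ext (congrArg (Fam r lev tr e) hl.symm)
  rw [hst] at t2 m2
  exact he (le_antisymm (m1 y (hr.symm hxy) t2) (m2 x hxy t1))

theorem xset_isState {r : A → A → Prop} (hr : Equivalence r) {lev : A → Ordinal}
    (hlev : ∀ x y : A, r x y → lev x = lev y) {tr : A → States r → Bool} {e : A → ℕ}
    (he : Function.Injective e) : IsState r (Xset r lev tr e) := by
  intro z
  rcases Set.eq_empty_or_nonempty (Xset r lev tr e ∩ {y | r y z}) with h | ⟨a, haX, har⟩
  · exact Or.inl h
  · refine Or.inr ⟨a, Set.eq_singleton_iff_unique_mem.mpr ⟨⟨haX, har⟩, ?_⟩⟩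
    rintro b ⟨hbX, hbr⟩
    exact cnd_unique hr hlev he hbX haX hbr har

theorem fam_isState {r : A → A → Prop} (hr : Equivalence r) {lev : A → Ordinal}
    (hlev : ∀ x y : A, r x y → lev x = lev y) {tr : A → States r → Bool} {e : A → ℕ}
    (he : Function.Injective e) (α : Ordinal) : IsState r (Fam r lev tr e α) := by
  rw [fam_eq]
  exact isState_mono (xset_isState hr hlev he) (fun x hx => hx.1)

theorem exists_model (r : A → A → Prop) [Countable A] (hr : Equivalence r)
    (lev : A → Ordinal) (hlev : ∀ x y : A, r x y → lev x = lev y)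
    (tr : A → States r → Bool)
    (hcont : ∀ x : A, @Continuous _ _ (stateTop r) ⊥ (tr x))
    (hlayer : ∀ (x : A) (X : States r), tr x X = tr x (restrict r lev (lev x) X)) :
    ∃ X : States r,
      (∀ x ∈ X.1, tr x X = true) ∧
      (∀ x : A, X.1 ∩ {y | r y x} = ∅ → tr x X = false) := by
  obtain ⟨e, he⟩ := countable_iff_exists_injective A |>.mp ‹Countable A›
  set S : Set A := Xset r lev tr e with hS
  refine ⟨⟨S, xset_isState hr hlev he⟩, ?_, ?_⟩
  all_goals
    have key : ∀ x : A, tr x ⟨S, xset_isState hr hlev he⟩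
        = tr x ⟨Fam r lev tr e (lev x), fam_isState hr hlev he (lev x)⟩ := by
      intro x
      rw [hlayer x ⟨S, xset_isState hr hlev he⟩]
      congr 1
      apply Subtype.ext
      show {y ∈ S | lev y < lev x} = Fam r lev tr e (lev x)
      rw [fam_eq]
  · intro x hx
    rw [key x]
    obtain ⟨h1, t1, _⟩ := hx
    have hst : (⟨Fam r lev tr e (lev x), fam_isState hr hlev he (lev x)⟩ : States r)
        = ⟨Fam r lev tr e (lev x), h1⟩ := Subtype.ext rfl
    rw [hst]
    exact t1
  · intro x hempty
    rw [key x]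
    by_contra hne
    have htx : tr x ⟨Fam r lev tr e (lev x), fam_isState hr hlev he (lev x)⟩ = true := by
      cases h : tr x ⟨Fam r lev tr e (lev x), fam_isState hr hlev he (lev x)⟩
      · exact absurd h hne
      · rfl
    -- the set of codes of class members that are true at their level's approximation
    set T : Set ℕ := e '' {y | r y x ∧
      tr y ⟨Fam r lev tr e (lev y), fam_isState hr hlev he (lev y)⟩ = true} with hT
    have hTne : T.Nonempty := ⟨e x, x, ⟨hr.refl x, htx⟩, rfl⟩
    obtain ⟨y, ⟨hyx, hty⟩, hey⟩ := Nat.sInf_mem hTne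
    have hyX : y ∈ Xset r lev tr e := by
      refine ⟨fam_isState hr hlev he (lev y), hty, ?_⟩
      intro z hzy htz
      have hzx : r z x := hr.trans hzy hyx
      have hlz : lev z = lev y := hlev z y hzy
      have htz' : tr z ⟨Fam r lev tr e (lev z), fam_isState hr hlev he (lev z)⟩ = true := by
        have hst : (⟨Fam r lev tr e (lev z), fam_isState hr hlev he (lev z)⟩ : States r)
            = ⟨Fam r lev tr e (lev y), fam_isState hr hlev he (lev y)⟩ := by
          apply Subtype.ext
          show Fam r lev tr e (lev z) = Fam r lev tr e (lev y)
          rw [hlz]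
        rw [hst]
        exact htz
      have : e z ∈ T := ⟨z, ⟨hzx, htz'⟩, rfl⟩
      calc e y = sInf T := hey
        _ ≤ e z := Nat.sInf_le this
    exact absurd hempty (by
      rw [Set.eq_empty_iff_forall_notMem]
      push_neg
      exact ⟨y, hyX, hyx⟩)
end

section
/- If X is a sound knowledge state and s ⊆ X is a finite state, then there exists a finite sound state t with s ⊆ t ⊆ X. -/
variable {A : Type*}

lemma exists_finite_subbasis {α : Type*} {S : Set (Set α)} {U : Set α}
    (hU : TopologicalSpace.GenerateOpen S U) {z : α} (hz : z ∈ U) :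
    ∃ f : Set (Set α), f.Finite ∧ f ⊆ S ∧ z ∈ ⋂₀ f ∧ ⋂₀ f ⊆ U := by
  revert hz
  induction hU with
  | basic u hu =>
    intro hz
    exact ⟨{u}, Set.finite_singleton u, by simpa, by simpa, by simp⟩
  | univ =>
    intro _
    exact ⟨∅, Set.finite_empty, by simp, by simp, by simp⟩
  | inter u v hu hv ihu ihv =>
    intro hz
    obtain ⟨f1, hf1, hf1S, hz1, hs1⟩ := ihu hz.1
    obtain ⟨f2, hf2, hf2S, hz2, hs2⟩ := ihv hz.2
    refine ⟨f1 ∪ f2, hf1.union hf2, Set.union_subset hf1S hf2S, ?_, ?_⟩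
    · rw [Set.sInter_union]; exact ⟨hz1, hz2⟩
    · rw [Set.sInter_union]; exact fun y hy => ⟨hs1 hy.1, hs2 hy.2⟩
  | sUnion ts hts ih =>
    intro hz
    obtain ⟨u, hu, hzu⟩ := hz
    obtain ⟨f, hf, hfS, hzf, hsf⟩ := ih u hu hzu
    exact ⟨f, hf, hfS, hzf, fun y hy => ⟨u, hu, hsf hy⟩⟩

theorem finite_sound_extension (r : A → A → Prop) [Countable A] (hr : Equivalence r)
    (lev : A → Ordinal) (hlev : ∀ x y : A, r x y → lev x = lev y)
    (tr : A → States r → Bool)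
    (hcont : ∀ x : A, @Continuous _ _ (stateTop r) ⊥ (tr x))
    (hlayer : ∀ (x : A) (X : States r), tr x X = tr x (restrict r lev (lev x) X))
    (X : States r) (hX : ∀ x ∈ X.1, tr x X = true)
    (s : Set A) (hs : s.Finite) (hsX : s ⊆ X.1) :
    ∃ t : States r, t.1.Finite ∧ s ⊆ t.1 ∧ t.1 ⊆ X.1 ∧ ∀ x ∈ t.1, tr x t = true := by
  classical
  -- Aset is injective
  have hAinj : Function.Injective (Aset r) := by
    intro a b hab
    have hstate : IsState r {a} := by
      intro x
      rcases Set.subset_singleton_iff_eq.mp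
          (Set.inter_subset_left (s := ({a} : Set A)) (t := {y | r y x})) with h | h
      · exact Or.inl h
      · exact Or.inr ⟨a, h⟩
    have ha : (⟨{a}, hstate⟩ : States r) ∈ Aset r a := rfl
    rw [hab] at ha
    exact (Set.mem_singleton_iff.mp ha).symm
  -- key: each x ∈ X has a finite witness set W of lower-level points
  have key : ∀ x, ∃ W : Set A, x ∈ X.1 →
      W.Finite ∧ W ⊆ X.1 ∧ (∀ w ∈ W, lev w < lev x) ∧
        ∀ t : States r, t.1 ⊆ X.1 → W ⊆ t.1 → tr x t = true := by
    intro x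
    by_cases hx : x ∈ X.1
    · set Z := restrict r lev (lev x) X with hZdef
      have hZ : tr x Z = true := by rw [← hlayer x X]; exact hX x hx
      have hopen : TopologicalSpace.GenerateOpen
          (Set.range (Aset r) ∪ Set.range (Bset r)) (tr x ⁻¹' {true}) := by
        have := @Continuous.isOpen_preimage _ _ (stateTop r) ⊥ (tr x) (hcont x)
          {true} (@isOpen_discrete _ ⊥ ⟨rfl⟩ _)
        exact this
      obtain ⟨f, hf, hfS, hzf, hsf⟩ := exists_finite_subbasis hopen
        (show Z ∈ tr x ⁻¹' {true} by simpa using hZ)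
      refine ⟨Aset r ⁻¹' f, fun _ => ⟨Set.Finite.preimage hAinj.injOn hf, ?_, ?_, ?_⟩⟩
      · intro w hw
        have hZw : Z ∈ Aset r w := hzf _ hw
        exact (hZw : w ∈ Z.1).1
      · intro w hw
        have hZw : Z ∈ Aset r w := hzf _ hw
        exact (hZw : w ∈ Z.1).2
      · intro t htX hWt
        have hmem : restrict r lev (lev x) t ∈ ⋂₀ f := by
          intro u hu
          rcases hfS hu with ⟨a, rfl⟩ | ⟨a, rfl⟩
          · have ha : a ∈ Aset r ⁻¹' f := hu
            have hZa : Z ∈ Aset r a := hzf _ hu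
            exact (⟨hWt ha, (hZa : a ∈ Z.1).2⟩ :
              a ∈ (restrict r lev (lev x) t).1)
          · have hZa : Z.1 ∩ {y | r y a} = ∅ := hzf _ hu
            show (restrict r lev (lev x) t).1 ∩ {y | r y a} = ∅
            apply Set.eq_empty_of_subset_empty
            rw [← hZa]
            apply Set.inter_subset_inter_left
            exact fun y hy => ⟨htX hy.1, hy.2⟩
        have := hsf hmem
        rw [hlayer x t]
        simpa using this
    · exact ⟨∅, fun h => absurd h hx⟩
  choose W hW using key
  -- closure under W by well-founded induction on levels
  have main : ∀ (α : Ordinal), ∀ x, lev x = α → x ∈ X.1 →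
      ∃ T : Set A, T.Finite ∧ T ⊆ X.1 ∧ x ∈ T ∧ ∀ y ∈ T, W y ⊆ T := by
    intro α
    induction α using Ordinal.induction with
    | h α IH =>
      intro x hxα hx
      obtain ⟨hWf, hWX, hWlev, _⟩ := hW x hx
      have hrec : ∀ w ∈ W x, ∃ T : Set A, T.Finite ∧ T ⊆ X.1 ∧ w ∈ T ∧ ∀ y ∈ T, W y ⊆ T :=
        fun w hw => IH (lev w) (hxα ▸ hWlev w hw) w rfl (hWX hw)
      choose! T hT using hrec
      refine ⟨insert x (⋃ w ∈ W x, T w), ?_, ?_, Set.mem_insert _ _, ?_⟩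
      · exact (hWf.biUnion fun w hw => (hT w hw).1).insert x
      · intro y hy
        rcases hy with rfl | hy
        · exact hx
        · obtain ⟨w, hw, hyw⟩ := Set.mem_iUnion₂.mp hy
          exact (hT w hw).2.1 hyw
      · intro y hy
        rcases hy with rfl | hy
        · intro w hw
          exact Set.mem_insert_iff.mpr (Or.inr (Set.mem_biUnion hw (hT w hw).2.2.1))
        · obtain ⟨w, hw, hyw⟩ := Set.mem_iUnion₂.mp hy
          intro z hz
          exact Set.mem_insert_iff.mpr
            (Or.inr (Set.mem_biUnion hw ((hT w hw).2.2.2 y hyw hz)))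
  have hmain : ∀ x ∈ s, ∃ T : Set A, T.Finite ∧ T ⊆ X.1 ∧ x ∈ T ∧ ∀ y ∈ T, W y ⊆ T :=
    fun x hx => main (lev x) x rfl (hsX hx)
  choose! T hT using hmain
  have htX : (⋃ x ∈ s, T x) ⊆ X.1 := by
    intro y hy
    obtain ⟨x, hx, hyx⟩ := Set.mem_iUnion₂.mp hy
    exact (hT x hx).2.1 hyx
  refine ⟨⟨⋃ x ∈ s, T x, isState_mono X.2 htX⟩, ?_, ?_, htX, ?_⟩
  · exact hs.biUnion fun x hx => (hT x hx).1
  · exact fun x hx => Set.mem_biUnion hx (hT x hx).2.2.1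
  · intro y hy
    obtain ⟨x, hx, hyx⟩ := Set.mem_iUnion₂.mp hy
    have hyX : y ∈ X.1 := (hT x hx).2.1 hyx
    refine (hW y hyX).2.2.2 _ htX ?_
    intro z hz
    exact Set.mem_biUnion hx ((hT x hx).2.2.2 y hyx hz)
end

section
/- Every realizer r has a finite sound zero: there exists a finite sound state t ∈ 𝒮 with r(t) = ∅. -/
variable {A : Type*}

theorem isState_singleton' (r : A → A → Prop) (a : A) : IsState r {a} := by
  intro x
  by_cases h : r a x
  · right
    refine ⟨a, ?_⟩
    ext z
    simp only [Set.mem_inter_iff, Set.mem_singleton_iff, Set.mem_setOf_eq]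
    constructor
    · rintro ⟨hz, _⟩; exact hz
    · rintro rfl; exact ⟨rfl, h⟩
  · left
    ext z
    simp only [Set.mem_inter_iff, Set.mem_singleton_iff, Set.mem_setOf_eq,
      Set.mem_empty_iff_false, iff_false, not_and]
    rintro rfl; exact h

theorem aset_inj (r : A → A → Prop) : Function.Injective (Aset r) := by
  intro a b h
  have h1 : (⟨{a}, isState_singleton' r a⟩ : States r) ∈ Aset r a := rfl
  rw [h] at h1
  exact (h1 : b ∈ ({a} : Set A)).symm

theorem exists_finite_positive_nbhd (r : A → A → Prop) {U : Set (States r)}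
    (hU : @IsOpen _ (stateTop r) U) {X : States r} (hX : X ∈ U) :
    ∃ F : Set A, F.Finite ∧ F ⊆ X.1 ∧
      ∀ Y : States r, Y.1 ⊆ X.1 → F ⊆ Y.1 → Y ∈ U := by
  letI := stateTop r
  have hbasis := TopologicalSpace.isTopologicalBasis_of_subbasis
    (s := Set.range (Aset r) ∪ Set.range (Bset r)) rfl
  obtain ⟨v, ⟨f, ⟨hfin, hsub⟩, rfl⟩, hXv, hvU⟩ := hbasis.exists_subset_of_mem_open hX hU
  refine ⟨Aset r ⁻¹' f, hfin.preimage (Set.injOn_of_injective (aset_inj r)),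
    fun a ha => hXv _ ha, fun Y hYX hFY => hvU ?_⟩
  intro s hs
  rcases hsub hs with ⟨a, rfl⟩ | ⟨b, rfl⟩
  · exact hFY hs
  · have hXb : X.1 ∩ {y | r y b} = ∅ := hXv _ hs
    exact Set.subset_empty_iff.mp (hXb ▸ Set.inter_subset_inter_left _ hYX)

noncomputable def memAux (r : A → A → Prop) (lev : A → Ordinal)
    (tr : A → States r → Bool) (enc : A → ℕ) : A → Prop :=
  (InvImage.wf lev Ordinal.lt_wf).fix fun x ih =>
    ∃ hS : IsState r {y | ∃ h : lev y < lev x, ih y h},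
      tr x ⟨_, hS⟩ = true ∧
        ∀ z, r z x → tr z ⟨_, hS⟩ = true → enc x ≤ enc z

def Slt (r : A → A → Prop) (lev : A → Ordinal) (tr : A → States r → Bool) (enc : A → ℕ)
    (α : Ordinal) : Set A :=
  {y | ∃ _ : lev y < α, memAux r lev tr enc y}

theorem memAux_iff (r : A → A → Prop) (lev : A → Ordinal)
    (tr : A → States r → Bool) (enc : A → ℕ) (x : A) :
    memAux r lev tr enc x ↔
      ∃ hS : IsState r (Slt r lev tr enc (lev x)),
        tr x ⟨_, hS⟩ = true ∧
          ∀ z, r z x → tr z ⟨_, hS⟩ = true → enc x ≤ enc z := by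
  conv_lhs => rw [memAux, WellFounded.fix_eq]
  rfl

section Model

variable {r : A → A → Prop} {lev : A → Ordinal} {tr : A → States r → Bool} {enc : A → ℕ}
variable (hr : Equivalence r) (hlev : ∀ x y : A, r x y → lev x = lev y)
  (henc : Function.Injective enc)

include hr hlev henc in
theorem memAux_unique {y₁ y₂ : A} (h₁ : memAux r lev tr enc y₁) (h₂ : memAux r lev tr enc y₂)
    (h12 : r y₁ y₂) : y₁ = y₂ := by
  have hl : lev y₁ = lev y₂ := hlev _ _ h12
  obtain ⟨hS₁, ht₁, hm₁⟩ := (memAux_iff r lev tr enc y₁).mp h₁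
  obtain ⟨hS₂, ht₂, hm₂⟩ := (memAux_iff r lev tr enc y₂).mp h₂
  have hset : Slt r lev tr enc (lev y₁) = Slt r lev tr enc (lev y₂) := by rw [hl]
  have hstates : (⟨_, hS₁⟩ : States r) = ⟨_, hS₂⟩ := Subtype.ext hset
  have e1 : enc y₁ ≤ enc y₂ := hm₁ y₂ (hr.symm h12) (by rw [hstates]; exact ht₂)
  have e2 : enc y₂ ≤ enc y₁ := hm₂ y₁ h12 (by rw [← hstates]; exact ht₁)
  exact henc (le_antisymm e1 e2)

include hr hlev henc in
theorem isState_model : IsState r {x | memAux r lev tr enc x} := by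
  intro x
  refine Set.Subsingleton.eq_empty_or_singleton ?_
  rintro y₁ ⟨hy₁, hr₁⟩ y₂ ⟨hy₂, hr₂⟩
  exact memAux_unique hr hlev henc hy₁ hy₂ (hr.trans hr₁ (hr.symm hr₂))

theorem restrict_model_eq (hM : IsState r {x | memAux r lev tr enc x}) (α : Ordinal) :
    restrict r lev α ⟨{x | memAux r lev tr enc x}, hM⟩ =
      ⟨Slt r lev tr enc α, isState_mono hM (fun y hy => hy.2)⟩ := by
  apply Subtype.ext
  ext y
  simp only [restrict, Slt, Set.mem_setOf_eq, exists_prop]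
  exact and_comm

theorem model_sound (hlayer : ∀ (x : A) (X : States r), tr x X = tr x (restrict r lev (lev x) X))
    (hM : IsState r {x | memAux r lev tr enc x}) {x : A} (hx : memAux r lev tr enc x) :
    tr x ⟨{x | memAux r lev tr enc x}, hM⟩ = true := by
  obtain ⟨hS, ht, -⟩ := (memAux_iff r lev tr enc x).mp hx
  refine (hlayer x _).trans ?_
  rw [restrict_model_eq hM (lev x)]
  rwa [show (⟨Slt r lev tr enc (lev x), isState_mono hM (fun y hy => hy.2)⟩ : States r)
      = ⟨_, hS⟩ from Subtype.ext rfl]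

include hr hlev in
theorem model_complete (hM : IsState r {x | memAux r lev tr enc x})
    (hlayer : ∀ (x : A) (X : States r), tr x X = tr x (restrict r lev (lev x) X))
    {x : A} (hx : tr x ⟨{x | memAux r lev tr enc x}, hM⟩ = true) :
    ∃ z, memAux r lev tr enc z ∧ r z x := by
  have hS : IsState r (Slt r lev tr enc (lev x)) := isState_mono hM (fun y hy => hy.2)
  have hx' : tr x (⟨Slt r lev tr enc (lev x), hS⟩ : States r) = true := by
    have hx := (hlayer x _).symm.trans hx
    rw [restrict_model_eq hM (lev x)] at hx
    exact hx
  set T : Set A := {z | r z x ∧ tr z (⟨Slt r lev tr enc (lev x), hS⟩ : States r) = true} with hT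
  have hxT : x ∈ T := ⟨hr.refl x, hx'⟩
  obtain ⟨n, ⟨z₀, hz₀T, rfl⟩, hmin⟩ := Nat.lt_wfRel.wf.has_min (enc '' T) ⟨enc x, x, hxT, rfl⟩
  refine ⟨z₀, ?_, hz₀T.1⟩
  have hlz : lev z₀ = lev x := hlev _ _ hz₀T.1
  have hset : Slt r lev tr enc (lev z₀) = Slt r lev tr enc (lev x) := by rw [hlz]
  have hS₀ : IsState r (Slt r lev tr enc (lev z₀)) := hset ▸ hS
  have hstates : (⟨_, hS₀⟩ : States r) = ⟨_, hS⟩ := Subtype.ext hset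
  rw [memAux_iff]
  refine ⟨hS₀, by rw [hstates]; exact hz₀T.2, ?_⟩
  intro z hzz₀ htz
  have hzT : z ∈ T := ⟨hr.trans hzz₀ hz₀T.1, by rw [← hstates]; exact htz⟩
  exact not_lt.mp (hmin (enc z) ⟨z, hzT, rfl⟩)

end Model

theorem realizer_has_finite_sound_zero (r : A → A → Prop) [Countable A] (hr : Equivalence r)
    (lev : A → Ordinal) (hlev : ∀ x y : A, r x y → lev x = lev y)
    (tr : A → States r → Bool)
    (hcont : ∀ x : A, @Continuous _ _ (stateTop r) ⊥ (tr x))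
    (hlayer : ∀ (x : A) (X : States r), tr x X = tr x (restrict r lev (lev x) X))
    (R : States r → Finset A)
    (hRcont : @Continuous _ _ (stateTop r) ⊥ R)
    (hR : ∀ (X : States r), ∀ x ∈ R X, X.1 ∩ {y | r y x} = ∅ ∧ tr x X = true) :
    ∃ t : States r, t.1.Finite ∧ (∀ x ∈ t.1, tr x t = true) ∧ R t = ∅ := by
  classical
  obtain ⟨enc, henc⟩ := exists_injective_nat A
  set M : Set A := {x | memAux r lev tr enc x} with hMdef
  have hM : IsState r M := isState_model hr hlev henc
  set Mst : States r := ⟨M, hM⟩ with hMst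
  -- the model is a zero of R
  have hRM : R Mst = ∅ := by
    by_contra h
    obtain ⟨x, hx⟩ := Finset.nonempty_iff_ne_empty.mpr h
    obtain ⟨hdisj, htrue⟩ := hR Mst x hx
    obtain ⟨z, hz, hzx⟩ := model_complete hr hlev hM hlayer htrue
    have : z ∈ Mst.1 ∩ {y | r y x} := ⟨hz, hzx⟩
    rw [hdisj] at this
    exact this
  -- witness sets for truth of each member of the model
  have hFx : ∀ x : A, ∃ F : Set A, F.Finite ∧ (∀ y ∈ F, lev y < lev x) ∧
      (memAux r lev tr enc x → F ⊆ Slt r lev tr enc (lev x) ∧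
        ∀ Y : States r, Y.1 ⊆ Slt r lev tr enc (lev x) → F ⊆ Y.1 → tr x Y = true) := by
    intro x
    by_cases hx : memAux r lev tr enc x
    · obtain ⟨hS, ht, -⟩ := (memAux_iff r lev tr enc x).mp hx
      have hUopen : @IsOpen _ (stateTop r) (tr x ⁻¹' {true}) :=
        @Continuous.isOpen_preimage _ _ (stateTop r) ⊥ _ (hcont x) _ (@isOpen_discrete Bool ⊥ (discreteTopology_bot _) _)
      have hmem : (⟨Slt r lev tr enc (lev x), hS⟩ : States r) ∈ tr x ⁻¹' {true} := ht
      obtain ⟨F, hFfin, hFsub, hFprop⟩ := exists_finite_positive_nbhd r hUopen hmem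
      refine ⟨F, hFfin, fun y hy => (hFsub hy).1, fun _ => ⟨hFsub, fun Y h1 h2 => ?_⟩⟩
      exact hFprop Y h1 h2
    · exact ⟨∅, Set.finite_empty, by simp, fun h => absurd h hx⟩
  choose Fx hFxfin hFxlev hFxmem using hFx
  -- closure operator
  set wf : WellFounded (InvImage (· < ·) lev) := InvImage.wf lev Ordinal.lt_wf with hwf
  set cl : A → Set A :=
    wf.fix (fun x ih => insert x (⋃ y, ⋃ h : y ∈ Fx x, ih y (hFxlev x y h))) with hcl
  have cl_eq : ∀ x, cl x = insert x (⋃ y, ⋃ _ : y ∈ Fx x, cl y) := by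
    intro x
    rw [hcl]
    exact wf.fix_eq _ x
  have clP : ∀ x : A, x ∈ cl x ∧ (cl x).Finite ∧
      (memAux r lev tr enc x → (∀ z ∈ cl x, memAux r lev tr enc z) ∧
        ∀ z ∈ cl x, Fx z ⊆ cl x) := by
    intro x
    induction x using wf.induction with
    | _ x ih =>
    rw [cl_eq x]
    have hFM : memAux r lev tr enc x → ∀ y ∈ Fx x, memAux r lev tr enc y := by
      intro hx y hy
      exact ((hFxmem x hx).1 hy).2
    refine ⟨Set.mem_insert _ _, ?_, ?_⟩
    · refine Set.Finite.insert _ (Set.Finite.biUnion (hFxfin x) fun y hy => ?_)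
      exact (ih y (hFxlev x y hy)).2.1
    · intro hx
      constructor
      · rintro z hz
        rcases Set.mem_insert_iff.mp hz with rfl | hz
        · exact hx
        · obtain ⟨y, hy, hzy⟩ := Set.mem_iUnion₂.mp hz
          exact ((ih y (hFxlev x y hy)).2.2 (hFM hx y hy)).1 z hzy
      · rintro z hz
        rcases Set.mem_insert_iff.mp hz with rfl | hz
        · intro y hy
          exact Set.mem_insert_iff.mpr (Or.inr (Set.mem_iUnion₂.mpr
            ⟨y, hy, (ih y (hFxlev z y hy)).1⟩))
        · obtain ⟨y, hy, hzy⟩ := Set.mem_iUnion₂.mp hz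
          intro w hw
          refine Set.mem_insert_iff.mpr (Or.inr (Set.mem_iUnion₂.mpr ⟨y, hy, ?_⟩))
          exact ((ih y (hFxlev x y hy)).2.2 (hFM hx y hy)).2 z hzy hw
  -- finite positive neighborhood for R at the model
  have hURopen : @IsOpen _ (stateTop r) (R ⁻¹' {∅}) :=
    @Continuous.isOpen_preimage _ _ (stateTop r) ⊥ _ hRcont _ (@isOpen_discrete (Finset A) ⊥ (discreteTopology_bot _) _)
  have hMmem : Mst ∈ R ⁻¹' {∅} := hRM
  obtain ⟨F₀, hF₀fin, hF₀sub, hF₀prop⟩ := exists_finite_positive_nbhd r hURopen hMmem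
  -- final state
  set t0 : Set A := ⋃ a, ⋃ _ : a ∈ F₀, cl a with ht0
  have ht0M : t0 ⊆ M := by
    rintro z hz
    obtain ⟨a, ha, hza⟩ := Set.mem_iUnion₂.mp hz
    exact ((clP a).2.2 (hF₀sub ha)).1 z hza
  have hF₀t0 : F₀ ⊆ t0 := fun a ha => Set.mem_iUnion₂.mpr ⟨a, ha, (clP a).1⟩
  have ht0closed : ∀ z ∈ t0, Fx z ⊆ t0 := by
    rintro z hz
    obtain ⟨a, ha, hza⟩ := Set.mem_iUnion₂.mp hz
    intro w hw
    exact Set.mem_iUnion₂.mpr ⟨a, ha, ((clP a).2.2 (hF₀sub ha)).2 z hza hw⟩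
  refine ⟨⟨t0, isState_mono hM ht0M⟩, Set.Finite.biUnion hF₀fin fun a _ => (clP a).2.1, ?_, ?_⟩
  · -- soundness
    intro z hz
    have hzM : memAux r lev tr enc z := ht0M hz
    refine (hlayer z _).trans ?_
    refine (hFxmem z hzM).2 _ ?_ ?_
    · rintro y ⟨hyt0, hylev⟩
      exact ⟨hylev, ht0M hyt0⟩
    · intro y hy
      exact ⟨ht0closed z hz hy, hFxlev z y hy⟩
  · -- zero
    exact hF₀prop ⟨t0, isState_mono hM ht0M⟩ ht0M hF₀t0
end
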